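/- Let X be a quasistable curve of genus g ≥ 2 and d an integer. If a multidegree d̲ on X is balanced, then for every connected component Z of the non-exceptional subcurve X̃ one has d_Z − d·w_Z/(2g−2) = −k_Z/2. Consequently, if d̲ is stably balanced then X̃ is connected. (Combinatorial formulation: model X by a graph with vertex weights w_i ∈ ℤ, a distinguished set of 'exceptional' vertices each with degree d_E = 1 and w_E = 0 and exactly two edges to the rest; balance means |d_Z − d·w_Z/(2g−2)| ≤ k_Z/2 for every vertex subset Z, where k_Z is the number of edges from Z to its complement. Prove that if Z is a union of connected components of the non-exceptional part together with none of the exceptional vertices, and every exceptional vertex has its two neighbors distributed so that k_Z counts edges to exceptional vertices, then equality d_Z − d·w_Z/(2g−2) = −k_Z/2 holds for each connected component Z of the non-exceptional part.) -/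

import Mathlib

/-- The number of edges of the graph `(V, E, head, tail)` joining the vertex subset `Z`
to its complement (the quantity `k_Z`). -/
def crossEdges {V E : Type} [Fintype E] [DecidableEq V]
    (head tail : E → V) (Z : Finset V) : ℕ :=
  (Finset.univ.filter (fun e =>
    (head e ∈ Z ∧ tail e ∉ Z) ∨ (head e ∉ Z ∧ tail e ∈ Z))).card

/-- Combinatorial model of a quasistable curve `X` of genus `g ≥ 2`: a graph with vertex
set `V` (components of `X`), edge set `E` (nodes), vertex degrees `d : V → ℤ` of total
degree `dtot`, and weights `w : V → ℤ` (degrees of the dualizing sheaf) of total `2g−2`;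
the exceptional vertices `Exc` have `d = 1`, `w = 0` and exactly two edges, both with
non-exceptional other endpoint.  Balance means
`|(2g−2)·d_Z − dtot·w_Z| ≤ (g−1)·k_Z` for every subset `Z` (the Basic Inequality with
denominators cleared).  Conclusions: (1) if `d̲` is balanced, then for every `Z` which is
a union of connected components of the non-exceptional subcurve `X̃` (i.e. `Z` is disjoint
from `Exc` and every edge leaving `Z` goes to an exceptional vertex), equality
`(2g−2)·d_Z − dtot·w_Z = −(g−1)·k_Z` holds; (2) consequently, if `d̲` is stably balanced
(every nonempty `Z` realizing this equality contains all non-exceptional vertices), then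
`X̃` is connected: every nonempty union of components of `X̃` is all of `X̃`. -/
theorem stmt7 {V E : Type} [Fintype V] [Fintype E] [DecidableEq V]
    (head tail : E → V) (Exc : Finset V) (d w : V → ℤ)
    (g : ℕ) (hg : 2 ≤ g) (dtot : ℤ)
    (hdtot : ∑ x, d x = dtot) (hw : ∑ x, w x = 2 * (g : ℤ) - 2)
    (hexc : ∀ x ∈ Exc, d x = 1 ∧ w x = 0 ∧
      (Finset.univ.filter (fun e => head e = x ∨ tail e = x)).card = 2 ∧
      (∀ e, head e = x → tail e ∉ Exc) ∧ (∀ e, tail e = x → head e ∉ Exc))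
    (hbal : ∀ Z : Finset V,
      |(2 * (g : ℤ) - 2) * (∑ x ∈ Z, d x) - dtot * (∑ x ∈ Z, w x)|
        ≤ ((g : ℤ) - 1) * (crossEdges head tail Z : ℤ)) :
    (∀ Z : Finset V, (∀ x ∈ Z, x ∉ Exc) →
      (∀ e, head e ∈ Z → tail e ∉ Z → tail e ∈ Exc) →
      (∀ e, tail e ∈ Z → head e ∉ Z → head e ∈ Exc) →
      (2 * (g : ℤ) - 2) * (∑ x ∈ Z, d x) - dtot * (∑ x ∈ Z, w x)
        = -(((g : ℤ) - 1) * (crossEdges head tail Z : ℤ))) ∧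
    ((∀ Z : Finset V, Z.Nonempty →
        (2 * (g : ℤ) - 2) * (∑ x ∈ Z, d x) - dtot * (∑ x ∈ Z, w x)
          = -(((g : ℤ) - 1) * (crossEdges head tail Z : ℤ)) →
        Finset.univ \ Exc ⊆ Z) →
      ∀ Z : Finset V, Z.Nonempty → (∀ x ∈ Z, x ∉ Exc) →
        (∀ e, head e ∈ Z → tail e ∉ Z → tail e ∈ Exc) →
        (∀ e, tail e ∈ Z → head e ∉ Z → head e ∈ Exc) →
        Z = Finset.univ \ Exc) := by
  classical
  have key : ∀ Z : Finset V, (∀ x ∈ Z, x ∉ Exc) →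
      (∀ e, head e ∈ Z → tail e ∉ Z → tail e ∈ Exc) →
      (∀ e, tail e ∈ Z → head e ∉ Z → head e ∈ Exc) →
      (2 * (g : ℤ) - 2) * (∑ x ∈ Z, d x) - dtot * (∑ x ∈ Z, w x)
        = -(((g : ℤ) - 1) * (crossEdges head tail Z : ℤ)) := by
    intro Z hZE hHT hTH
    set N : Finset V := Exc.filter
      (fun x => ∃ e, (head e = x ∧ tail e ∈ Z) ∨ (tail e = x ∧ head e ∈ Z)) with hNdef
    have hNE : ∀ x ∈ N, x ∈ Exc := fun x hx => (Finset.mem_filter.mp hx).1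
    have hZN : Disjoint Z N := by
      rw [Finset.disjoint_left]
      intro x hxZ hxN
      exact hZE x hxZ (hNE x hxN)
    set Y : Finset V := Z ∪ N with hYdef
    -- sums over Y
    have hdY : ∑ x ∈ Y, d x = (∑ x ∈ Z, d x) + N.card := by
      rw [hYdef, Finset.sum_union hZN]
      congr 1
      rw [Finset.sum_congr rfl (fun x hx => (hexc x (hNE x hx)).1)]
      simp
    have hwY : ∑ x ∈ Y, w x = ∑ x ∈ Z, w x := by
      rw [hYdef, Finset.sum_union hZN]
      have h0 : ∑ x ∈ N, w x = 0 :=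
        Finset.sum_eq_zero (fun x hx => (hexc x (hNE x hx)).2.1)
      rw [h0, add_zero]
    -- no edge joins two exceptional vertices; no loops at exceptional vertices
    have hHN : ∀ e : E, head e ∈ Exc → tail e ∉ Exc := by
      intro e he
      exact (hexc (head e) he).2.2.2.1 e rfl
    have hTN : ∀ e : E, tail e ∈ Exc → head e ∉ Exc := by
      intro e he
      exact (hexc (tail e) he).2.2.2.2 e rfl
    -- the crossing edge sets
    set A : Finset E := Finset.univ.filter (fun e =>
      (head e ∈ Z ∧ tail e ∉ Z) ∨ (head e ∉ Z ∧ tail e ∈ Z)) with hAdef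
    set B : Finset E := Finset.univ.filter (fun e =>
      (head e ∈ Y ∧ tail e ∉ Y) ∨ (head e ∉ Y ∧ tail e ∈ Y)) with hBdef
    set C : Finset E := Finset.univ.filter (fun e =>
      head e ∈ N ∨ tail e ∈ N) with hCdef
    have hZsubY : Z ⊆ Y := Finset.subset_union_left
    have hNsubY : N ⊆ Y := Finset.subset_union_right
    have hmemY : ∀ v : V, v ∈ Y ↔ v ∈ Z ∨ v ∈ N := by
      intro v; rw [hYdef, Finset.mem_union]
    -- If an edge crosses Z with head in Z, then tail ∈ N
    have htailN : ∀ e : E, head e ∈ Z → tail e ∉ Z → tail e ∈ N := by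
      intro e h1 h2
      rw [hNdef, Finset.mem_filter]
      exact ⟨hHT e h1 h2, ⟨e, Or.inr ⟨rfl, h1⟩⟩⟩
    have hheadN : ∀ e : E, tail e ∈ Z → head e ∉ Z → head e ∈ N := by
      intro e h1 h2
      rw [hNdef, Finset.mem_filter]
      exact ⟨hTH e h1 h2, ⟨e, Or.inl ⟨rfl, h1⟩⟩⟩
    -- vertices of N are not in Z
    have hNnotZ : ∀ v ∈ N, v ∉ Z := by
      intro v hv hvZ
      exact hZE v hvZ (hNE v hv)
    -- A and B are disjoint
    have hAB : Disjoint A B := by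
      rw [Finset.disjoint_left]
      intro e heA heB
      rw [hAdef, Finset.mem_filter] at heA
      rw [hBdef, Finset.mem_filter] at heB
      rcases heA.2 with ⟨h1, h2⟩ | ⟨h1, h2⟩
      · have : tail e ∈ Y := hNsubY (htailN e h1 h2)
        rcases heB.2 with ⟨h3, h4⟩ | ⟨h3, h4⟩
        · exact h4 this
        · exact h3 (hZsubY h1)
      · have : head e ∈ Y := hNsubY (hheadN e h2 h1)
        rcases heB.2 with ⟨h3, h4⟩ | ⟨h3, h4⟩
        · exact h4 (hZsubY h2)
        · exact h3 this
    -- A ∪ B = C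
    have hABC : A ∪ B = C := by
      apply Finset.ext
      intro e
      rw [Finset.mem_union, hAdef, hBdef, hCdef, Finset.mem_filter, Finset.mem_filter,
        Finset.mem_filter]
      simp only [Finset.mem_univ, true_and]
      constructor
      · rintro ((⟨h1, h2⟩ | ⟨h1, h2⟩) | (⟨h1, h2⟩ | ⟨h1, h2⟩))
        · exact Or.inr (htailN e h1 h2)
        · exact Or.inl (hheadN e h2 h1)
        · -- head ∈ Y, tail ∉ Y
          rcases (hmemY (head e)).mp h1 with hz | hn
          · exact absurd (hNsubY (htailN e hz (fun ht => h2 (hZsubY ht)))) h2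
          · exact Or.inl hn
        · rcases (hmemY (tail e)).mp h2 with hz | hn
          · exact absurd (hNsubY (hheadN e hz (fun ht => h1 (hZsubY ht)))) h1
          · exact Or.inr hn
      · rintro (hn | hn)
        · -- head e ∈ N
          have htE : tail e ∉ Exc := hHN e (hNE _ hn)
          have htN : tail e ∉ N := fun h => htE (hNE _ h)
          by_cases htZ : tail e ∈ Z
          · exact Or.inl (Or.inr ⟨hNnotZ _ hn, htZ⟩)
          · refine Or.inr (Or.inl ⟨hNsubY hn, ?_⟩)
            intro hY
            rcases (hmemY (tail e)).mp hY with h | h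
            · exact htZ h
            · exact htN h
        · have htE : head e ∉ Exc := hTN e (hNE _ hn)
          have htN : head e ∉ N := fun h => htE (hNE _ h)
          by_cases htZ : head e ∈ Z
          · exact Or.inl (Or.inl ⟨htZ, hNnotZ _ hn⟩)
          · refine Or.inr (Or.inr ⟨?_, hNsubY hn⟩)
            intro hY
            rcases (hmemY (head e)).mp hY with h | h
            · exact htZ h
            · exact htN h
    -- C has 2 * N.card elements
    have hCbi : C = N.biUnion (fun x => Finset.univ.filter (fun e => head e = x ∨ tail e = x)) := by
      apply Finset.ext
      intro e
      rw [hCdef, Finset.mem_filter, Finset.mem_biUnion]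
      simp only [Finset.mem_univ, true_and, Finset.mem_filter]
      constructor
      · rintro (h | h)
        · exact ⟨head e, h, Or.inl rfl⟩
        · exact ⟨tail e, h, Or.inr rfl⟩
      · rintro ⟨x, hx, (h | h)⟩
        · exact Or.inl (h ▸ hx)
        · exact Or.inr (h ▸ hx)
    have hCcard : C.card = 2 * N.card := by
      rw [hCbi, Finset.card_biUnion]
      · rw [Finset.sum_congr rfl (fun x hx => (hexc x (hNE x hx)).2.2.1)]
        simp [mul_comm]
      · intro x hx y hy hxy
        rw [Function.onFun, Finset.disjoint_left]
        intro e he1 he2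
        simp only [Finset.mem_filter, Finset.mem_univ, true_and] at he1 he2
        rcases he1 with h1 | h1 <;> rcases he2 with h2 | h2
        · exact hxy (h1 ▸ h2 ▸ rfl)
        · exact hHN e (h1 ▸ hNE x hx) (h2 ▸ hNE y hy)
        · exact hTN e (h1 ▸ hNE x hx) (h2 ▸ hNE y hy)
        · exact hxy (h1 ▸ h2 ▸ rfl)
    have hcount : A.card + B.card = 2 * N.card := by
      rw [← hCcard, ← hABC, Finset.card_union_of_disjoint hAB]
    -- crossEdges identities
    have hcZ : crossEdges head tail Z = A.card := rfl
    have hcY : crossEdges head tail Y = B.card := rfl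
    -- apply balance to Z and Y
    have h1 := hbal Z
    have h2 := hbal Y
    rw [hdY, hwY, hcY] at h2
    rw [hcZ] at h1 ⊢
    rw [abs_le] at h1 h2
    have hcount' : (A.card : ℤ) + (B.card : ℤ) = 2 * (N.card : ℤ) := by
      exact_mod_cast hcount
    have hg' : (2 : ℤ) ≤ (g : ℤ) := by exact_mod_cast hg
    nlinarith [h1.1, h1.2, h2.1, h2.2]
  refine ⟨key, ?_⟩
  intro hstab Z hne h1 h2 h3
  have heq := key Z h1 h2 h3
  have hsub := hstab Z hne heq
  apply Finset.Subset.antisymm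
  · intro x hx
    rw [Finset.mem_sdiff]
    exact ⟨Finset.mem_univ x, h1 x hx⟩
  · exact hsub
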